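/- Let p be a real number, φ(x,y) = sin x · sin y, and w(x,y) = (p²/2)·sin²x·(1 − cos y) + sin²y. Then for all (x,y) ∈ (0,π) × (0,π), −(1/2)·(∂²w/∂x² + ∂²w/∂y²) + (1/(2·φ(x,y)))·((∂φ/∂x)·(∂w/∂x) + (∂φ/∂y)·(∂w/∂y)) = w(x,y). -/

import Mathlib

open Real Set

lemma wderivx (p y : ℝ) : deriv (fun x' => (p ^ 2 / 2) * Real.sin x' ^ 2 * (1 - Real.cos y) + Real.sin y ^ 2)
    = fun x => (p ^ 2 / 2) * (2 * Real.sin x * Real.cos x) * (1 - Real.cos y) := by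
  funext x
  have h : HasDerivAt (fun x' => (p ^ 2 / 2) * Real.sin x' ^ 2 * (1 - Real.cos y) + Real.sin y ^ 2)
      ((p ^ 2 / 2) * (2 * Real.sin x * Real.cos x) * (1 - Real.cos y)) x := by
    have := (((Real.hasDerivAt_sin x).pow 2).const_mul (p ^ 2 / 2)).mul_const (1 - Real.cos y)
    simpa [mul_comm, mul_assoc, mul_left_comm] using this.add_const (Real.sin y ^ 2)
  exact h.deriv

lemma wderivxx (p y x : ℝ) :
    deriv (fun x => (p ^ 2 / 2) * (2 * Real.sin x * Real.cos x) * (1 - Real.cos y)) x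
    = (p ^ 2 / 2) * (2 * (Real.cos x * Real.cos x - Real.sin x * Real.sin x)) * (1 - Real.cos y) := by
  have heq : (fun x => (p ^ 2 / 2) * (2 * Real.sin x * Real.cos x) * (1 - Real.cos y))
      = fun x => (p ^ 2 * (1 - Real.cos y)) * (Real.sin x * Real.cos x) := by
    funext x; ring
  have h1 : HasDerivAt (fun x => (p ^ 2 * (1 - Real.cos y)) * (Real.sin x * Real.cos x))
      ((p ^ 2 * (1 - Real.cos y)) * (Real.cos x * Real.cos x + Real.sin x * (-Real.sin x))) x :=
    ((Real.hasDerivAt_sin x).mul (Real.hasDerivAt_cos x)).const_mul _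
  rw [heq, h1.deriv]; ring

lemma wderivy (p x : ℝ) : deriv (fun y' => (p ^ 2 / 2) * Real.sin x ^ 2 * (1 - Real.cos y') + Real.sin y' ^ 2)
    = fun y => (p ^ 2 / 2) * Real.sin x ^ 2 * Real.sin y + 2 * Real.sin y * Real.cos y := by
  funext y
  have h : HasDerivAt (fun y' => (p ^ 2 / 2) * Real.sin x ^ 2 * (1 - Real.cos y') + Real.sin y' ^ 2)
      ((p ^ 2 / 2) * Real.sin x ^ 2 * Real.sin y + 2 * Real.sin y * Real.cos y) y := by
    have h1 : HasDerivAt (fun y' => 1 - Real.cos y') (Real.sin y) y := by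
      simpa using (Real.hasDerivAt_cos y).const_sub 1
    have h2 := (h1.const_mul ((p ^ 2 / 2) * Real.sin x ^ 2)).add ((Real.hasDerivAt_sin y).pow 2)
    refine h2.congr_deriv ?_
    ring
  exact h.deriv

lemma wderivyy (p x y : ℝ) :
    deriv (fun y => (p ^ 2 / 2) * Real.sin x ^ 2 * Real.sin y + 2 * Real.sin y * Real.cos y) y
    = (p ^ 2 / 2) * Real.sin x ^ 2 * Real.cos y
      + 2 * (Real.cos y * Real.cos y - Real.sin y * Real.sin y) := by
  have heq : (fun y => (p ^ 2 / 2) * Real.sin x ^ 2 * Real.sin y + 2 * Real.sin y * Real.cos y)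
      = fun y => ((p ^ 2 / 2) * Real.sin x ^ 2) * Real.sin y + 2 * (Real.sin y * Real.cos y) := by
    funext y; ring
  have h1 := (Real.hasDerivAt_sin y).const_mul ((p ^ 2 / 2) * Real.sin x ^ 2)
  have h2 := ((Real.hasDerivAt_sin y).mul (Real.hasDerivAt_cos y)).const_mul 2
  rw [heq, HasDerivAt.deriv (f := fun y => ((p ^ 2 / 2) * Real.sin x ^ 2) * Real.sin y + 2 * (Real.sin y * Real.cos y)) (h1.add h2)]; ring

lemma phiderivx (y x : ℝ) : deriv (fun x' => Real.sin x' * Real.sin y) x = Real.cos x * Real.sin y :=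
  ((Real.hasDerivAt_sin x).mul_const (Real.sin y)).deriv

lemma phiderivy (x y : ℝ) : deriv (fun y' => Real.sin x * Real.sin y') y = Real.sin x * Real.cos y :=
  ((Real.hasDerivAt_sin y).const_mul (Real.sin x)).deriv

/-- With `φ(x,y) = sin x · sin y` and `w(x,y) = (p²/2)·sin²x·(1 − cos y) + sin²y`,
the elliptic equation `−(1/2)Δw + (1/(2φ))⟨∇φ, ∇w⟩ = w` holds on `(0,π) × (0,π)`,
for every real `p`. -/
theorem stmt4 (p : ℝ) :
    let φ : ℝ → ℝ → ℝ := fun x y => Real.sin x * Real.sin y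
    let w : ℝ → ℝ → ℝ := fun x y =>
      (p ^ 2 / 2) * Real.sin x ^ 2 * (1 - Real.cos y) + Real.sin y ^ 2
    ∀ x ∈ Ioo 0 π, ∀ y ∈ Ioo 0 π,
      -(1 / 2) * (deriv (deriv (fun x' => w x' y)) x + deriv (deriv (fun y' => w x y')) y)
        + (1 / (2 * φ x y)) *
          (deriv (fun x' => φ x' y) x * deriv (fun x' => w x' y) x
            + deriv (fun y' => φ x y') y * deriv (fun y' => w x y') y)
      = w x y := by
  intro φ w x hx y hy
  have hsx : Real.sin x ≠ 0 := ne_of_gt (Real.sin_pos_of_pos_of_lt_pi hx.1 hx.2)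
  have hsy : Real.sin y ≠ 0 := ne_of_gt (Real.sin_pos_of_pos_of_lt_pi hy.1 hy.2)
  show -(1 / 2) * (deriv (deriv (fun x' => (p ^ 2 / 2) * Real.sin x' ^ 2 * (1 - Real.cos y) + Real.sin y ^ 2)) x
      + deriv (deriv (fun y' => (p ^ 2 / 2) * Real.sin x ^ 2 * (1 - Real.cos y') + Real.sin y' ^ 2)) y)
    + (1 / (2 * (Real.sin x * Real.sin y))) *
      (deriv (fun x' => Real.sin x' * Real.sin y) x *
          deriv (fun x' => (p ^ 2 / 2) * Real.sin x' ^ 2 * (1 - Real.cos y) + Real.sin y ^ 2) x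
        + deriv (fun y' => Real.sin x * Real.sin y') y *
          deriv (fun y' => (p ^ 2 / 2) * Real.sin x ^ 2 * (1 - Real.cos y') + Real.sin y' ^ 2) y)
    = (p ^ 2 / 2) * Real.sin x ^ 2 * (1 - Real.cos y) + Real.sin y ^ 2
  rw [wderivx, wderivy, wderivxx, wderivyy, phiderivx, phiderivy]
  simp only
  have hx2 : Real.sin x ^ 2 = 1 - Real.cos x ^ 2 := by
    have := Real.sin_sq_add_cos_sq x; linarith
  have hy2 : Real.sin y ^ 2 = 1 - Real.cos y ^ 2 := by
    have := Real.sin_sq_add_cos_sq y; linarith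
  field_simp
  nlinarith [Real.sin_sq_add_cos_sq x, Real.sin_sq_add_cos_sq y, sq_nonneg (Real.sin x * Real.sin y), hx2, hy2]
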